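/- With g(t) = 2|t - ⌊t⌋ - 1/2|, for all real t₁, t₂, φ and every positive integer m: the sign of g(m·t₁ + φ) - g(m·t₂ + φ) equals the sign of -sin(π(m(t₁ + t₂) + 2φ)) · sin(π m (t₁ - t₂)). -/

import Mathlib

open Real

noncomputable def sawtooth (t : ℝ) : ℝ := 2 * |t - ⌊t⌋ - 1/2|

lemma sign_congr {x y : ℝ} (h1 : x < 0 ↔ y < 0) (h2 : 0 < x ↔ 0 < y) :
    Real.sign x = Real.sign y := by
  rcases lt_trichotomy x 0 with h|h|h
  · rw [Real.sign_of_neg h, Real.sign_of_neg (h1.mp h)]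
  · have hy : y = 0 := by
      by_contra hy
      rcases (lt_or_gt_of_ne hy) with hy'|hy'
      · exact absurd (h1.mpr hy') (by simp [h])
      · exact absurd (h2.mpr hy') (by simp [h])
    rw [h, hy]
  · rw [Real.sign_of_pos h, Real.sign_of_pos (h2.mp h)]

lemma sawtooth_eq (t : ℝ) : sawtooth t = 1 - Real.arccos (Real.cos (2*π*t)) / π := by
  have hπ : (0:ℝ) < π := Real.pi_pos
  have hf0 : 0 ≤ Int.fract t := Int.fract_nonneg t
  have hf1 : Int.fract t < 1 := Int.fract_lt_one t
  have hc : Real.cos (2*π*t) = Real.cos (2*π*Int.fract t) := by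
    have : (2*π*t) = 2*π*Int.fract t + (⌊t⌋ : ℝ) * (2*π) := by
      rw [Int.fract]; ring
    rw [this, Real.cos_add_int_mul_two_pi]
  have hsaw : sawtooth t = 2 * |Int.fract t - 1/2| := by
    unfold sawtooth Int.fract; norm_num
  rw [hc, hsaw]
  set f := Int.fract t with hfdef
  rcases le_or_gt f (1/2) with h | h
  · rw [abs_of_nonpos (by linarith), Real.arccos_cos (by positivity) (by nlinarith)]
    field_simp
    ring
  · have h2 : Real.cos (2*π*f) = Real.cos (2*π - 2*π*f) := by
      rw [Real.cos_sub, Real.cos_two_pi, Real.sin_two_pi]; ring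
    rw [abs_of_nonneg (by linarith), h2,
      Real.arccos_cos (by nlinarith) (by nlinarith)]
    field_simp
    ring

theorem sign_diff_eq (m : ℕ) (hm : 0 < m) (t₁ t₂ φ : ℝ) :
    Real.sign (sawtooth (m * t₁ + φ) - sawtooth (m * t₂ + φ)) =
      Real.sign (-(Real.sin (π * (m * (t₁ + t₂) + 2 * φ)) *
        Real.sin (π * m * (t₁ - t₂)))) := by
  have hπ : (0:ℝ) < π := Real.pi_pos
  set a : ℝ := (m:ℝ) * t₁ + φ with ha
  set b : ℝ := (m:ℝ) * t₂ + φ with hb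
  set A := Real.arccos (Real.cos (2*π*a)) with hA
  set B := Real.arccos (Real.cos (2*π*b)) with hB
  have hdiff : sawtooth a - sawtooth b = (B - A) / π := by
    rw [sawtooth_eq, sawtooth_eq]; field_simp; rw [hA, hB]; ring
  have hmemA : Real.cos (2*π*a) ∈ Set.Icc (-1:ℝ) 1 :=
    ⟨Real.neg_one_le_cos _, Real.cos_le_one _⟩
  have hmemB : Real.cos (2*π*b) ∈ Set.Icc (-1:ℝ) 1 :=
    ⟨Real.neg_one_le_cos _, Real.cos_le_one _⟩
  have hkey : Real.cos (2*π*a) - Real.cos (2*π*b) =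
      -2 * (Real.sin (π * (m * (t₁ + t₂) + 2 * φ)) * Real.sin (π * m * (t₁ - t₂))) := by
    rw [Real.cos_sub_cos]
    have e1 : (2*π*a + 2*π*b)/2 = π * (m * (t₁ + t₂) + 2 * φ) := by rw [ha, hb]; ring
    have e2 : (2*π*a - 2*π*b)/2 = π * m * (t₁ - t₂) := by rw [ha, hb]; ring
    rw [e1, e2]; ring
  have hlt : ∀ x y : ℝ, x ∈ Set.Icc (-1:ℝ) 1 → y ∈ Set.Icc (-1:ℝ) 1 →
      (Real.arccos x < Real.arccos y ↔ y < x) := by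
    intro x y hx hy
    constructor
    · intro h
      by_contra hc
      push_neg at hc
      rcases eq_or_lt_of_le hc with rfl | hlt'
      · exact lt_irrefl _ h
      · exact absurd (Real.strictAntiOn_arccos hx hy hlt') (not_lt.mpr h.le)
    · exact fun h => Real.strictAntiOn_arccos hy hx h
  rw [hdiff]
  apply sign_congr
  · constructor
    · intro h
      have hBA : B < A := by
        have := (div_lt_iff₀ hπ).mp h
        linarith
      have := (hlt _ _ hmemB hmemA).mp hBA
      linarith
    · intro h
      have hcc : Real.cos (2*π*a) < Real.cos (2*π*b) := by linarith
      have hBA : B < A := (hlt _ _ hmemB hmemA).mpr hcc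
      exact div_neg_of_neg_of_pos (by linarith) hπ
  · constructor
    · intro h
      have hAB : A < B := by
        have := (lt_div_iff₀ hπ).mp h
        linarith
      have := (hlt _ _ hmemA hmemB).mp hAB
      linarith
    · intro h
      have hcc : Real.cos (2*π*b) < Real.cos (2*π*a) := by linarith
      have hAB : A < B := (hlt _ _ hmemA hmemB).mpr hcc
      exact div_pos (by linarith) hπ
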